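/- For all real x, γ and positive reals ν, α, β, the marginal likelihood of x obtained by integrating the Gaussian likelihood against the NIG prior has the closed form: ∫_{σ²=0}^{∞} ∫_{μ=-∞}^{∞} [√(1/(2πσ²)) exp(−(x−μ)²/(2σ²))] · p(μ, σ² | γ, ν, α, β) dμ dσ² = (Γ(α + 1/2)/Γ(α)) · √(ν/π) · (2β(1+ν))^α · (ν(x−γ)² + 2β(1+ν))^{−(α + 1/2)}. -/

import Mathlib

open MeasureTheory

open Real Set

/-- The joint density of the Normal-Inverse-Gamma (NIG) distribution with
parameters `γ ν α β`, evaluated at mean `μ` and variance `s = σ²`. -/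
noncomputable def nigPdf (γ ν α β μ s : ℝ) : ℝ :=
  (β ^ α * Real.sqrt ν) / (Real.Gamma α * Real.sqrt (2 * Real.pi * s)) *
    (1 / s) ^ (α + 1) * Real.exp (-(2 * β + ν * (γ - μ) ^ 2) / (2 * s))

lemma gauss_shift (b m : ℝ) :
    ∫ μ : ℝ, Real.exp (-b * (μ - m) ^ 2) = Real.sqrt (Real.pi / b) := by
  rw [← integral_gaussian b]
  exact integral_sub_right_eq_self (fun μ => Real.exp (-b * μ ^ 2)) m

lemma invgamma (a K : ℝ) (ha : 0 < a) (hK : 0 < K) :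
    ∫ s in Ioi (0:ℝ), s ^ (-a - 1) * Real.exp (-K / s)
      = Real.Gamma a * K ^ (-a) := by
  have h := integral_comp_rpow_Ioi (fun y => y ^ (a - 1) * Real.exp (-(K * y)))
    (p := -1) (by norm_num)
  calc ∫ s in Ioi (0:ℝ), s ^ (-a - 1) * Real.exp (-K / s)
      = ∫ x in Ioi (0:ℝ), (|(-1:ℝ)| * x ^ ((-1:ℝ) - 1)) •
          (fun y => y ^ (a - 1) * Real.exp (-(K * y))) (x ^ (-1:ℝ)) := by
        refine setIntegral_congr_fun measurableSet_Ioi (fun s hs => ?_)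
        have hs' : (0:ℝ) < s := hs
        simp only [smul_eq_mul]
        rw [show |(-1:ℝ)| = 1 by norm_num, one_mul, Real.rpow_neg_one,
          Real.inv_rpow hs'.le, ← Real.rpow_neg hs'.le,
          show ((-1:ℝ) - 1) = -2 by norm_num, ← mul_assoc, ← Real.rpow_add hs',
          show (-2 + -(a-1)) = -a - 1 by ring]
        congr 1
        field_simp
    _ = (1/K) ^ a * Real.Gamma a := by
        rw [h]; exact integral_rpow_mul_exp_neg_mul_Ioi ha hK
    _ = Real.Gamma a * K ^ (-a) := by
        rw [one_div, Real.inv_rpow hK.le, ← Real.rpow_neg hK.le, mul_comm]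

/-- The marginal likelihood of a Gaussian observation `x` under a
Normal-Inverse-Gamma prior has the stated closed form. -/
theorem nig_marginal_likelihood
    (x γ ν α β : ℝ) (hν : 0 < ν) (hα : 0 < α) (hβ : 0 < β) :
    ∫ s in Set.Ioi (0 : ℝ), ∫ μ : ℝ,
        (Real.sqrt (1 / (2 * Real.pi * s)) * Real.exp (-(x - μ) ^ 2 / (2 * s))) *
          nigPdf γ ν α β μ s
      = (Real.Gamma (α + 1 / 2) / Real.Gamma α) * Real.sqrt (ν / Real.pi) *
          (2 * β * (1 + ν)) ^ α *
          (ν * (x - γ) ^ 2 + 2 * β * (1 + ν)) ^ (-(α + 1 / 2)) := by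
  have hπ := Real.pi_pos
  have h1ν : (0:ℝ) < 1 + ν := by linarith
  have hΓα : (0:ℝ) < Real.Gamma α := Real.Gamma_pos_of_pos hα
  set T : ℝ := ν * (x - γ) ^ 2 + 2 * β * (1 + ν) with hT_def
  have hT : 0 < T := by positivity
  set K : ℝ := T / (2 * (1 + ν)) with hK_def
  have hK : 0 < K := by positivity
  set E : ℝ := β ^ α * Real.sqrt ν /
      (Real.Gamma α * Real.sqrt (2 * Real.pi) * Real.sqrt (1 + ν)) with hE_def
  have hs2π : Real.sqrt (2 * Real.pi) ≠ 0 := by positivity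
  have hs1ν : Real.sqrt (1 + ν) ≠ 0 := by positivity
  have step1 : ∀ s ∈ Ioi (0:ℝ), (∫ μ : ℝ,
        (Real.sqrt (1 / (2 * Real.pi * s)) * Real.exp (-(x - μ) ^ 2 / (2 * s))) *
          nigPdf γ ν α β μ s)
      = E * (s ^ (-(α + 1/2) - 1) * Real.exp (-K / s)) := by
    intro s hs
    have hs' : (0:ℝ) < s := hs
    set m : ℝ := (x + ν * γ) / (1 + ν) with hm_def
    set C0 : ℝ := Real.sqrt (1 / (2 * Real.pi * s)) *
        (β ^ α * Real.sqrt ν / (Real.Gamma α * Real.sqrt (2 * Real.pi * s)) *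
          (1 / s) ^ (α + 1)) with hC0_def
    set D : ℝ := C0 * Real.exp (-K / s) with hD_def
    have harg : ∀ μ : ℝ, -(x - μ) ^ 2 / (2 * s) + -(2 * β + ν * (γ - μ) ^ 2) / (2 * s)
        = -K / s + -((1 + ν) / (2 * s)) * (μ - m) ^ 2 := by
      intro μ
      rw [hK_def, hT_def, hm_def]
      field_simp
      ring
    have key : ∀ μ : ℝ,
        (Real.sqrt (1 / (2 * Real.pi * s)) * Real.exp (-(x - μ) ^ 2 / (2 * s))) *
          nigPdf γ ν α β μ s
        = D * Real.exp (-((1 + ν) / (2 * s)) * (μ - m) ^ 2) := by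
      intro μ
      rw [nigPdf, hD_def, hC0_def]
      rw [show (Real.sqrt (1 / (2 * Real.pi * s)) * Real.exp (-(x - μ) ^ 2 / (2 * s))) *
          ((β ^ α * Real.sqrt ν) / (Real.Gamma α * Real.sqrt (2 * Real.pi * s)) *
            (1 / s) ^ (α + 1) * Real.exp (-(2 * β + ν * (γ - μ) ^ 2) / (2 * s)))
        = (Real.sqrt (1 / (2 * Real.pi * s)) *
            (β ^ α * Real.sqrt ν / (Real.Gamma α * Real.sqrt (2 * Real.pi * s)) *
              (1 / s) ^ (α + 1))) *
          (Real.exp (-(x - μ) ^ 2 / (2 * s)) * Real.exp (-(2 * β + ν * (γ - μ) ^ 2) / (2 * s)))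
        from by ring]
      rw [← Real.exp_add, harg μ, Real.exp_add]
      ring
    simp only [key]
    rw [MeasureTheory.integral_const_mul, gauss_shift]
    -- now pure algebra in s
    have h2πs : Real.sqrt (2 * Real.pi * s) = Real.sqrt (2 * Real.pi) * Real.sqrt s :=
      Real.sqrt_mul (by positivity) s
    have hinv : Real.sqrt (1 / (2 * Real.pi * s)) = 1 / (Real.sqrt (2 * Real.pi) * Real.sqrt s) := by
      rw [one_div, Real.sqrt_inv, h2πs, one_div]
    have hdiv : Real.sqrt (Real.pi / ((1 + ν) / (2 * s)))
        = Real.sqrt (2 * Real.pi) * Real.sqrt s / Real.sqrt (1 + ν) := by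
      rw [show Real.pi / ((1 + ν) / (2 * s)) = (2 * Real.pi * s) / (1 + ν) by
          field_simp,
        Real.sqrt_div (by positivity), h2πs]
    have hpow : (1 / s) ^ (α + 1) = s ^ (-(α + 1)) := by
      rw [one_div, Real.inv_rpow hs'.le, ← Real.rpow_neg hs'.le]
    have hsplit : s ^ (-(α + 1/2) - 1) = s ^ (-(α + 1)) * (Real.sqrt s)⁻¹ := by
      rw [show -(α + 1/2) - 1 = (-(α + 1)) + (-(1/2)) by ring, Real.rpow_add hs']
      congr 1
      rw [Real.rpow_neg hs'.le, ← Real.sqrt_eq_rpow]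
    rw [hD_def, hC0_def, hE_def, hinv, hdiv, hpow, hsplit]
    have hss : Real.sqrt s ≠ 0 := by positivity
    field_simp
    ring
    rw [← Real.sqrt_mul (by positivity)]; ring_nf
  rw [setIntegral_congr_fun measurableSet_Ioi step1, MeasureTheory.integral_const_mul,
    invgamma (α + 1/2) K (by positivity) hK]
  -- final algebra
  have hKpow : K ^ (-(α + 1/2)) = (2 * (1 + ν)) ^ (α + 1/2) * T ^ (-(α + 1/2)) := by
    rw [hK_def, Real.div_rpow hT.le (by positivity), Real.rpow_neg (by positivity : (0:ℝ) ≤ 2 * (1 + ν)),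
      div_eq_mul_inv, inv_inv, mul_comm]
  have h2 : (2 * (1 + ν)) ^ (α + 1/2)
      = (2 * (1 + ν)) ^ α * (Real.sqrt 2 * Real.sqrt (1 + ν)) := by
    rw [Real.rpow_add (by positivity), ← Real.sqrt_eq_rpow,
      Real.sqrt_mul (by norm_num : (0:ℝ) ≤ 2)]
  have h3 : (2 * β * (1 + ν)) ^ α = β ^ α * (2 * (1 + ν)) ^ α := by
    rw [← Real.mul_rpow hβ.le (by positivity)]; congr 1; ring
  have h4 : Real.sqrt (ν / Real.pi) = Real.sqrt ν / Real.sqrt Real.pi :=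
    Real.sqrt_div hν.le _
  have h5 : Real.sqrt (2 * Real.pi) = Real.sqrt 2 * Real.sqrt Real.pi :=
    Real.sqrt_mul (by norm_num) _
  rw [hKpow, h2, h3, h4, hE_def, h5]
  have hsπ : Real.sqrt Real.pi ≠ 0 := by positivity
  have hs2 : Real.sqrt 2 ≠ 0 := by positivity
  field_simp
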